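/- Let (X_v)_{v∈V} be a family of random variables on a probability space (Ω, 𝓕, P) indexed by a finite set V, each valued in a nonempty finite type, and let C ∈ V. If M ⊆ V \ {C} is a Markov blanket of C and a feature v ∈ V \ {C} is strongly relevant to C, then v ∈ M; equivalently, for every v ∈ V \ (M ∪ {C}), the variables X_C and X_v are conditionally independent given the family (X_w)_{w ∈ V \ {C, v}}. -/

import Mathlib

open MeasureTheory ProbabilityTheory Set

namespace CFS

variable {V : Type*}

/-- Parents of `v`: vertices with an edge into `v`. -/
def Pa (E : V → V → Prop) (v : V) : Set V := {u | E u v}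

/-- Children of `v`: vertices with an edge from `v`. -/
def Ch (E : V → V → Prop) (v : V) : Set V := {u | E v u}

/-- Descendants of `v`: vertices reachable from `v` by a nonempty directed path. -/
def Desc (E : V → V → Prop) (v : V) : Set V := {u | Relation.TransGen E v u}

/-- Spouses of `v`: the other parents of the children of `v`. -/
def Sp (E : V → V → Prop) (v : V) : Set V := {u | u ≠ v ∧ ∃ w, E u w ∧ E v w}

/-- The Markov blanket set `mb(v)` in the graph: parents, children and spouses. -/
def mb (E : V → V → Prop) (v : V) : Set V := Pa E v ∪ Ch E v ∪ Sp E v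

/-- The edge relation is acyclic (defines a DAG). -/
def Acyclic (E : V → V → Prop) : Prop := ∀ v, ¬ Relation.TransGen E v v

/-- Adjacency: an edge in either direction. -/
def Adj (E : V → V → Prop) (u v : V) : Prop := E u v ∨ E v u

/-- `f 0, f 1, …, f n` is an undirected path between `i` and `j`:
distinct vertices, consecutive ones adjacent. -/
structure IsUPath (E : V → V → Prop) (i j : V) (n : ℕ) (f : ℕ → V) : Prop where
  pos : 0 < n
  start : f 0 = i
  finish : f n = j
  inj : ∀ s ≤ n, ∀ t ≤ n, f s = f t → s = t
  adj : ∀ t < n, Adj E (f t) (f (t + 1))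

/-- The interior vertex at position `t` of the path `f` is a collider:
both incident edges of the path point into it. -/
def ColliderAt (E : V → V → Prop) (f : ℕ → V) (t : ℕ) : Prop :=
  E (f (t - 1)) (f t) ∧ E (f (t + 1)) (f t)

/-- The path `f 0, …, f n` is blocked by `S`: some interior non-collider lies in `S`,
or some interior collider is such that neither it nor any of its descendants lies in `S`. -/
def Blocked (E : V → V → Prop) (S : Set V) (n : ℕ) (f : ℕ → V) : Prop :=
  ∃ t, 0 < t ∧ t < n ∧
    ((¬ ColliderAt E f t ∧ f t ∈ S) ∨
      (ColliderAt E f t ∧ f t ∉ S ∧ ∀ d ∈ Desc E (f t), d ∉ S))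

/-- `i` and `j` are d-separated by `S`: every undirected path between them is blocked by `S`. -/
def DSep (E : V → V → Prop) (i j : V) (S : Set V) : Prop :=
  ∀ n f, IsUPath E i j n f → Blocked E S n f

/-- The sets `A` and `B` are d-separated by `S`. -/
def DSepSet (E : V → V → Prop) (A B S : Set V) : Prop :=
  ∀ i ∈ A, ∀ j ∈ B, DSep E i j S

variable {Ω Val : Type*} [mΩ : MeasurableSpace Ω] [MeasurableSpace Val]

/-- The σ-algebra generated by the family of random variables `(X v)_{v ∈ A}`. -/
def famSigma (X : V → Ω → Val) (A : Set V) : MeasurableSpace Ω :=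
  ⨆ v ∈ A, MeasurableSpace.comap (X v) inferInstance

theorem famSigma_le {X : V → Ω → Val} (hX : ∀ v, Measurable (X v)) (A : Set V) :
    famSigma X A ≤ mΩ :=
  iSup₂_le fun v _ => (hX v).comap_le

/-- The families `(X a)_{a ∈ A}` and `(X b)_{b ∈ B}` are conditionally independent
given the family `(X s)_{s ∈ S}`. -/
def CondIndepFam [StandardBorelSpace Ω] (X : V → Ω → Val) (hX : ∀ v, Measurable (X v))
    (P : Measure Ω) [IsFiniteMeasure P] (S A B : Set V) : Prop :=
  CondIndep (famSigma X S) (famSigma X A) (famSigma X B) (famSigma_le hX S) P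

/-- The Markov condition: every variable is conditionally independent of its
non-descendants (other than itself and its parents) given its parents. -/
def MarkovCondition [StandardBorelSpace Ω] (E : V → V → Prop) (X : V → Ω → Val)
    (hX : ∀ v, Measurable (X v)) (P : Measure Ω) [IsFiniteMeasure P] : Prop :=
  ∀ v, CondIndepFam X hX P (Pa E v) {v} (univ \ ({v} ∪ Desc E v ∪ Pa E v))

/-- `M ⊆ V \ {C}` is a Markov blanket of `C`: conditioned on `(X m)_{m ∈ M}`,
all other variables are independent of `X C`. -/
def IsMarkovBlanket [StandardBorelSpace Ω] (X : V → Ω → Val) (hX : ∀ v, Measurable (X v))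
    (P : Measure Ω) [IsFiniteMeasure P] (C : V) (M : Set V) : Prop :=
  C ∉ M ∧ CondIndepFam X hX P M {C} (univ \ (M ∪ {C}))

/-- A Markov boundary of `C` is a Markov blanket of `C` no proper subset of which
is a Markov blanket of `C`. -/
def IsMarkovBoundary [StandardBorelSpace Ω] (X : V → Ω → Val) (hX : ∀ v, Measurable (X v))
    (P : Measure Ω) [IsFiniteMeasure P] (C : V) (M : Set V) : Prop :=
  IsMarkovBlanket X hX P C M ∧ ∀ M' ⊂ M, ¬ IsMarkovBlanket X hX P C M'

/-- Faithfulness: conditional independence holds exactly when d-separation holds. -/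
def Faithful [StandardBorelSpace Ω] (E : V → V → Prop) (X : V → Ω → Val)
    (hX : ∀ v, Measurable (X v)) (P : Measure Ω) [IsFiniteMeasure P] : Prop :=
  ∀ A B S : Set V, A.Nonempty → B.Nonempty →
    Disjoint A B → Disjoint A S → Disjoint B S →
    (CondIndepFam X hX P S A B ↔ DSepSet E A B S)

/-- `v` is strongly relevant to `C`: `X C` and `X v` are not conditionally independent
given all the remaining variables. -/
def StronglyRelevant [StandardBorelSpace Ω] (X : V → Ω → Val) (hX : ∀ v, Measurable (X v))
    (P : Measure Ω) [IsFiniteMeasure P] (C v : V) : Prop :=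
  ¬ CondIndepFam X hX P (univ \ {C, v}) {C} {v}

end CFS

open CFS

section Aux

open MeasureTheory ProbabilityTheory

/-- If two integrable functions have equal integrals on a π-system generating a
sub-σ-algebra `m`, and equal total integrals, then they have equal integrals on every
`m`-measurable set. -/
lemma setIntegral_eq_of_generateFrom {Ω : Type*} {C : Set (Set Ω)}
    {m : MeasurableSpace Ω} [mΩ : MeasurableSpace Ω] {μ : Measure Ω}
    (hgen : m = MeasurableSpace.generateFrom C) (hpi : IsPiSystem C) (hm : m ≤ mΩ)
    {g h : Ω → ℝ} (hg : Integrable g μ) (hh : Integrable h μ)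
    (htot : ∫ x, g x ∂μ = ∫ x, h x ∂μ)
    (hC : ∀ s ∈ C, ∫ x in s, g x ∂μ = ∫ x in s, h x ∂μ) :
    ∀ ⦃s⦄, MeasurableSet[m] s → ∫ x in s, g x ∂μ = ∫ x in s, h x ∂μ := by
  refine @MeasurableSpace.induction_on_inter Ω m
    (fun s _ => ∫ x in s, g x ∂μ = ∫ x in s, h x ∂μ) C hgen hpi (by simp) hC ?_ ?_
  · intro t htm iht
    have htm' : MeasurableSet[mΩ] t := hm _ htm
    have h1 := integral_add_compl htm' hg
    have h2 := integral_add_compl htm' hh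
    linarith
  · intro f hdisj hfm ihf
    have hfm' : ∀ i, MeasurableSet[mΩ] (f i) := fun i => hm _ (hfm i)
    rw [integral_iUnion hfm' hdisj hg.integrableOn,
        integral_iUnion hfm' hdisj hh.integrableOn]
    exact tsum_congr ihf

/-- Under conditional independence of `m₁` and `m₂` given `w`, the conditional expectation of
an `m₁`-set given `w ⊔ m₂` equals the one given `w`. -/
lemma condexp_sup_ae_eq_condexp {Ω : Type*} {w m₁ m₂ : MeasurableSpace Ω}
    [mΩ : MeasurableSpace Ω] [StandardBorelSpace Ω] {μ : Measure Ω} [IsProbabilityMeasure μ]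
    (hw : w ≤ mΩ) (h1 : m₁ ≤ mΩ) (h2 : m₂ ≤ mΩ)
    (hind : CondIndep w m₁ m₂ hw μ) {A : Set Ω} (hA : MeasurableSet[m₁] A) :
    (μ⟦A | w ⊔ m₂⟧) =ᵐ[μ] (μ⟦A | w⟧) := by
  have hind' := (condIndep_iff w m₁ m₂ hw h1 h2 μ).mp hind
  have hm : w ⊔ m₂ ≤ mΩ := sup_le hw h2
  set Cpi : Set (Set Ω) := {s | ∃ W, MeasurableSet[w] W ∧ ∃ B, MeasurableSet[m₂] B ∧ s = W ∩ B}
    with hCpi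
  have hgen : w ⊔ m₂ = MeasurableSpace.generateFrom Cpi := by
    refine le_antisymm (sup_le ?_ ?_) (MeasurableSpace.generateFrom_le ?_)
    · intro W hW
      exact MeasurableSpace.measurableSet_generateFrom
        ⟨W, hW, univ, MeasurableSet.univ, (Set.inter_univ W).symm⟩
    · intro B hB
      exact MeasurableSpace.measurableSet_generateFrom
        ⟨univ, MeasurableSet.univ, B, hB, (Set.univ_inter B).symm⟩
    · rintro s ⟨W, hW, B, hB, rfl⟩
      exact (MeasurableSet.inter (le_sup_left (a := w) (b := m₂) W hW)
        (le_sup_right (a := w) (b := m₂) B hB))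
  have hpi : IsPiSystem Cpi := by
    rintro s ⟨W1, hW1, B1, hB1, rfl⟩ t ⟨W2, hW2, B2, hB2, rfl⟩ -
    exact ⟨W1 ∩ W2, hW1.inter hW2, B1 ∩ B2, hB1.inter hB2, by ext x; simp; tauto⟩
  have hAmeas : MeasurableSet[mΩ] A := h1 A hA
  have hfA : Integrable (A.indicator (fun _ => (1 : ℝ))) μ :=
    (integrable_const (1 : ℝ)).indicator hAmeas
  refine ((ae_eq_condExp_of_forall_setIntegral_eq hm hfA
    (fun s _ _ => integrable_condExp.integrableOn) (fun s hs _ => ?_)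
    ⟨_, stronglyMeasurable_condExp.mono le_sup_left, Filter.EventuallyEq.rfl⟩).symm : _)
  refine setIntegral_eq_of_generateFrom hgen hpi hm integrable_condExp hfA ?_ ?_ hs
  · rw [integral_condExp hw]
  · rintro s ⟨W, hW, B, hB, rfl⟩
    have hWmeas : MeasurableSet[mΩ] W := hw W hW
    have hBmeas : MeasurableSet[mΩ] B := h2 B hB
    have hBind : (fun x => (μ⟦A | w⟧) x * B.indicator (fun _ => (1 : ℝ)) x)
        = B.indicator (fun x => (μ⟦A | w⟧) x) := by
      ext x; by_cases hx : x ∈ B <;> simp [hx]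
    have hint : Integrable ((μ⟦A | w⟧) * B.indicator (fun _ => (1 : ℝ))) μ := by
      show Integrable (fun x => (μ⟦A | w⟧) x * B.indicator (fun _ => (1 : ℝ)) x) μ
      rw [hBind]
      exact integrable_condExp.indicator hBmeas
    have hfB : Integrable (B.indicator (fun _ => (1 : ℝ))) μ :=
      (integrable_const (1 : ℝ)).indicator hBmeas
    have hpull : (μ[(μ⟦A | w⟧) * B.indicator (fun _ => (1 : ℝ)) | w])
        =ᵐ[μ] (μ⟦A | w⟧) * (μ⟦B | w⟧) :=
      condExp_mul_of_stronglyMeasurable_left stronglyMeasurable_condExp hint hfB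
    have hprod : (μ⟦A | w⟧) * (μ⟦B | w⟧) =ᵐ[μ] (μ⟦A ∩ B | w⟧) := (hind' A B hA hB).symm
    calc ∫ x in W ∩ B, (μ⟦A | w⟧) x ∂μ
        = ∫ x in W, B.indicator (fun y => (μ⟦A | w⟧) y) x ∂μ := by
          rw [setIntegral_indicator hBmeas]
      _ = ∫ x in W, ((μ⟦A | w⟧) * B.indicator (fun _ => (1 : ℝ))) x ∂μ := by
          rw [← hBind]; rfl
      _ = ∫ x in W, (μ[(μ⟦A | w⟧) * B.indicator (fun _ => (1 : ℝ)) | w]) x ∂μ :=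
          (setIntegral_condExp hw hint hW).symm
      _ = ∫ x in W, (μ⟦A ∩ B | w⟧) x ∂μ := by
          refine integral_congr_ae (ae_restrict_of_ae ?_)
          filter_upwards [hpull, hprod] with x h1x h2x
          rw [h1x, h2x]
      _ = ∫ x in W, (A ∩ B).indicator (fun _ => (1 : ℝ)) x ∂μ :=
          setIntegral_condExp hw ((integrable_const (1 : ℝ)).indicator
            (hAmeas.inter hBmeas)) hW
      _ = ∫ x in W ∩ B, A.indicator (fun _ => (1 : ℝ)) x ∂μ := by
          rw [setIntegral_indicator (hAmeas.inter hBmeas), setIntegral_indicator hAmeas]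
          rw [Set.inter_assoc, Set.inter_comm A B]

/-- Variant with a smaller σ-algebra added to the conditioning one. -/
lemma condexp_sup_ae_eq_condexp_of_le {Ω : Type*} {w m₁ m₂ m₃ : MeasurableSpace Ω}
    [mΩ : MeasurableSpace Ω] [StandardBorelSpace Ω] {μ : Measure Ω} [IsProbabilityMeasure μ]
    (hw : w ≤ mΩ) (h1 : m₁ ≤ mΩ) (h2 : m₂ ≤ mΩ)
    (hind : CondIndep w m₁ m₂ hw μ) {A : Set Ω} (hA : MeasurableSet[m₁] A)
    (h32 : m₃ ≤ m₂) :
    (μ⟦A | w ⊔ m₃⟧) =ᵐ[μ] (μ⟦A | w⟧) := by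
  have hle : w ⊔ m₃ ≤ w ⊔ m₂ := sup_le_sup_left h32 w
  have hm2 : w ⊔ m₂ ≤ mΩ := sup_le hw h2
  have h3 : w ⊔ m₃ ≤ mΩ := sup_le hw (h32.trans h2)
  calc (μ⟦A | w ⊔ m₃⟧)
      =ᵐ[μ] μ[(μ⟦A | w ⊔ m₂⟧) | w ⊔ m₃] := (condExp_condExp_of_le hle hm2).symm
    _ =ᵐ[μ] μ[(μ⟦A | w⟧) | w ⊔ m₃] :=
        condExp_congr_ae (condexp_sup_ae_eq_condexp hw h1 h2 hind hA)
    _ = (μ⟦A | w⟧) := condExp_of_stronglyMeasurable h3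
        (stronglyMeasurable_condExp.mono le_sup_left) integrable_condExp

/-- The weak union property of conditional independence. -/
lemma condIndep_weak_union {Ω : Type*} {w m₁ m₂ m₃ : MeasurableSpace Ω}
    [mΩ : MeasurableSpace Ω] [StandardBorelSpace Ω] {μ : Measure Ω} [IsProbabilityMeasure μ]
    (hw : w ≤ mΩ) (h1 : m₁ ≤ mΩ) (h2 : m₂ ≤ mΩ) (h3 : m₃ ≤ mΩ)
    (hws : w ⊔ m₃ ≤ mΩ)
    (hind : CondIndep w m₁ (m₂ ⊔ m₃) hw μ) :
    CondIndep (w ⊔ m₃) m₁ m₂ hws μ := by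
  rw [condIndep_iff _ _ _ hws h1 h2 μ]
  intro A B hA hB
  have h23 : m₂ ⊔ m₃ ≤ mΩ := sup_le h2 h3
  have hbig : w ⊔ m₃ ≤ w ⊔ (m₂ ⊔ m₃) := sup_le_sup_left le_sup_right w
  have hwbig : w ⊔ (m₂ ⊔ m₃) ≤ mΩ := sup_le hw h23
  have hAmeas : MeasurableSet[mΩ] A := h1 A hA
  have hBmeas : MeasurableSet[mΩ] B := h2 B hB
  have hstep : (μ⟦A | w ⊔ (m₂ ⊔ m₃)⟧) =ᵐ[μ] (μ⟦A | w⟧) :=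
    condexp_sup_ae_eq_condexp hw h1 h23 hind hA
  have hA3 : (μ⟦A | w ⊔ m₃⟧) =ᵐ[μ] (μ⟦A | w⟧) :=
    condexp_sup_ae_eq_condexp_of_le hw h1 h23 hind hA le_sup_right
  have hfA : Integrable (A.indicator (fun _ => (1 : ℝ))) μ :=
    (integrable_const (1 : ℝ)).indicator hAmeas
  have hfB : Integrable (B.indicator (fun _ => (1 : ℝ))) μ :=
    (integrable_const (1 : ℝ)).indicator hBmeas
  have hsplit : (A ∩ B).indicator (fun _ => (1 : ℝ))
      = B.indicator (fun _ => (1 : ℝ)) * A.indicator (fun _ => (1 : ℝ)) := by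
    ext x; by_cases hxA : x ∈ A <;> by_cases hxB : x ∈ B <;> simp [hxA, hxB]
  have hintBA : Integrable (B.indicator (fun _ => (1 : ℝ))
      * A.indicator (fun _ => (1 : ℝ))) μ := by
    rw [← hsplit]; exact (integrable_const (1 : ℝ)).indicator (hAmeas.inter hBmeas)
  have hBsm : StronglyMeasurable[w ⊔ (m₂ ⊔ m₃)] (B.indicator (fun _ => (1 : ℝ))) :=
    (stronglyMeasurable_const.indicator hB).mono (le_sup_of_le_right le_sup_left)
  have hgind : (fun x => (μ⟦A | w⟧) x * B.indicator (fun _ => (1 : ℝ)) x)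
      = B.indicator (fun x => (μ⟦A | w⟧) x) := by
    ext x; by_cases hx : x ∈ B <;> simp [hx]
  have hintgB : Integrable ((μ⟦A | w⟧) * B.indicator (fun _ => (1 : ℝ))) μ := by
    show Integrable (fun x => (μ⟦A | w⟧) x * B.indicator (fun _ => (1 : ℝ)) x) μ
    rw [hgind]
    exact integrable_condExp.indicator hBmeas
  have hinner : (μ[(A ∩ B).indicator (fun _ => (1 : ℝ)) | w ⊔ (m₂ ⊔ m₃)])
      =ᵐ[μ] (μ⟦A | w⟧) * B.indicator (fun _ => (1 : ℝ)) := by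
    rw [hsplit]
    calc (μ[B.indicator (fun _ => (1 : ℝ)) * A.indicator (fun _ => (1 : ℝ))
          | w ⊔ (m₂ ⊔ m₃)])
        =ᵐ[μ] B.indicator (fun _ => (1 : ℝ))
          * (μ⟦A | w ⊔ (m₂ ⊔ m₃)⟧) :=
          condExp_mul_of_stronglyMeasurable_left hBsm hintBA hfA
      _ =ᵐ[μ] (μ⟦A | w⟧) * B.indicator (fun _ => (1 : ℝ)) := by
          filter_upwards [hstep] with x hx
          simp only [Pi.mul_apply, hx, mul_comm]
  calc (μ⟦A ∩ B | w ⊔ m₃⟧)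
      =ᵐ[μ] μ[(μ[(A ∩ B).indicator (fun _ => (1 : ℝ)) | w ⊔ (m₂ ⊔ m₃)]) | w ⊔ m₃] :=
        (condExp_condExp_of_le hbig hwbig).symm
    _ =ᵐ[μ] μ[(μ⟦A | w⟧) * B.indicator (fun _ => (1 : ℝ)) | w ⊔ m₃] :=
        condExp_congr_ae hinner
    _ =ᵐ[μ] (μ⟦A | w⟧) * (μ⟦B | w ⊔ m₃⟧) :=
        condExp_mul_of_stronglyMeasurable_left
          (stronglyMeasurable_condExp.mono le_sup_left) hintgB hfB
    _ =ᵐ[μ] (μ⟦A | w ⊔ m₃⟧) * (μ⟦B | w ⊔ m₃⟧) := by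
        filter_upwards [hA3] with x hx
        simp only [Pi.mul_apply, hx]

end Aux

lemma famSigma_union {V Ω Val : Type*} [MeasurableSpace Ω] [MeasurableSpace Val]
    (X : V → Ω → Val) (A B : Set V) :
    famSigma X (A ∪ B) = famSigma X A ⊔ famSigma X B := by
  simp only [famSigma]; exact iSup_union

lemma condIndep_congr_left {Ω : Type*} {m' m'' m₁ m₂ : MeasurableSpace Ω}
    [mΩ : MeasurableSpace Ω] [StandardBorelSpace Ω] {μ : MeasureTheory.Measure Ω}
    [MeasureTheory.IsFiniteMeasure μ] (h : m' = m'') (hm' : m' ≤ mΩ) (hm'' : m'' ≤ mΩ)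
    (hi : ProbabilityTheory.CondIndep m'' m₁ m₂ hm'' μ) :
    ProbabilityTheory.CondIndep m' m₁ m₂ hm' μ := by subst h; exact hi

/-- Every strongly relevant feature belongs to every Markov blanket of `C`; equivalently,
every feature outside `M ∪ {C}` is conditionally independent of `X C` given the rest. -/
theorem stmt_10
    {V Ω Val : Type*} [Fintype V] [MeasurableSpace Ω] [StandardBorelSpace Ω]
    [MeasurableSpace Val] [DiscreteMeasurableSpace Val] [Fintype Val] [Nonempty Val]
    (X : V → Ω → Val) (hX : ∀ v, Measurable (X v))
    (P : MeasureTheory.Measure Ω) [MeasureTheory.IsProbabilityMeasure P]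
    (C : V) (M : Set V) (hM : IsMarkovBlanket X hX P C M) :
    (∀ v, v ≠ C → StronglyRelevant X hX P C v → v ∈ M) ∧
    (∀ v, v ≠ C → v ∉ M → CondIndepFam X hX P (Set.univ \ {C, v}) {C} {v}) := by
  obtain ⟨hCM, hCI⟩ := hM
  have main : ∀ v, v ≠ C → v ∉ M → CondIndepFam X hX P (Set.univ \ {C, v}) {C} {v} := by
    intro v hvC hvM
    have hR : (Set.univ \ (M ∪ {C}) : Set V) = {v} ∪ (Set.univ \ (M ∪ {C, v})) := by
      ext x
      simp only [Set.mem_diff, Set.mem_univ, true_and, Set.mem_union, Set.mem_insert_iff,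
        Set.mem_singleton_iff]
      by_cases hx : x = v
      · subst hx; simp [hvM, hvC]
      · tauto
    have hU : (Set.univ \ ({C, v} : Set V)) = M ∪ (Set.univ \ (M ∪ {C, v})) := by
      ext x
      have hxC : x ∈ M → x ≠ C := fun hx he => hCM (he ▸ hx)
      have hxv : x ∈ M → x ≠ v := fun hx he => hvM (he ▸ hx)
      simp only [Set.mem_diff, Set.mem_univ, true_and, Set.mem_union, Set.mem_insert_iff,
        Set.mem_singleton_iff]
      tauto
    unfold CondIndepFam at hCI ⊢
    rw [hR, famSigma_union] at hCI
    have key : famSigma X (Set.univ \ ({C, v} : Set V))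
        = famSigma X M ⊔ famSigma X (Set.univ \ (M ∪ {C, v})) := by
      rw [hU, famSigma_union]
    exact condIndep_congr_left key _ _
      (condIndep_weak_union (famSigma_le hX M) (famSigma_le hX {C}) (famSigma_le hX {v})
        (famSigma_le hX _) (key ▸ famSigma_le hX (Set.univ \ ({C, v} : Set V))) hCI)
  exact ⟨fun v hvC hrel => by_contra fun hvM => hrel (main v hvC hvM), main⟩
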